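/- Let n ≥ 3, let (H; T_1, …, T_k) be a comb in K_n such that additionally T_i \ H ≠ ∅ for every i, and let T be a Hamiltonian cycle of K_n. Then |δ(H) ∩ E(T)| + Σ_{i=1}^{k} |δ(T_i) ∩ E(T)| ≥ 3k + 1; that is, the comb inequality x(δ(H)) + Σ_{i=1}^{k} x(δ(T_i)) ≥ 3k+1 is valid for the characteristic vector of every Hamiltonian cycle of K_n. -/

import Mathlib

open SimpleGraph Finset

attribute [local instance] Classical.propDecidable

/-- An edge `e` crosses the vertex set `S` if it has an endpoint in `S`
and an endpoint outside `S`. -/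
def crossing {V : Type*} (S : Finset V) (e : Sym2 V) : Prop :=
  (∃ a ∈ e, a ∈ S) ∧ (∃ a ∈ e, a ∉ S)

/-- A comb with handle `H` and teeth `T 0, …, T (k-1)`. -/
def IsComb {V : Type*} [Fintype V] [DecidableEq V]
    (H : Finset V) {k : ℕ} (T : Fin k → Finset V) : Prop :=
  3 ≤ k ∧ Odd k ∧
  (∀ i j, i ≠ j → Disjoint (T i) (T j)) ∧
  (∀ i, (H ∩ T i).Nonempty) ∧
  (H \ Finset.univ.biUnion T).Nonempty

lemma crossing_mk {V : Type*} (S : Finset V) (u w : V) :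
    crossing S s(u,w) ↔ ((u ∈ S ∨ w ∈ S) ∧ (u ∉ S ∨ w ∉ S)) := by
  simp [crossing]

lemma parity_lemma {V : Type*} (S : Finset V) {G : SimpleGraph V} {a b : V}
    (p : G.Walk a b) :
    (p.edges.countP (fun e => decide (crossing S e))) % 2 =
      (if (a ∈ S ↔ b ∈ S) then 0 else 1) := by
  induction p with
  | nil => simp
  | @cons a c b h q ih =>
    rw [SimpleGraph.Walk.edges_cons, List.countP_cons, Nat.add_mod, ih]
    by_cases ha : a ∈ S <;> by_cases hc : c ∈ S <;> by_cases hb : b ∈ S <;>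
      simp_all [crossing_mk]

lemma const_of_no_crossing {V : Type*} (S : Finset V) {G : SimpleGraph V} {a b : V}
    (p : G.Walk a b) (h : ∀ e ∈ p.edges, ¬ crossing S e) :
    ∀ x ∈ p.support, (x ∈ S ↔ a ∈ S) := by
  induction p with
  | nil => intro x hx; simp_all
  | @cons a c b hadj q ih =>
    intro x hx
    have hac : (a ∈ S ↔ c ∈ S) := by
      have := h s(a,c) (by simp)
      rw [crossing_mk] at this; tauto
    rw [SimpleGraph.Walk.support_cons] at hx
    rcases List.mem_cons.mp hx with rfl | hx
    · tauto
    · have := ih (fun e he => h e (by simp [he])) x hx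
      tauto

lemma card_filter_toFinset {α : Type*} [DecidableEq α] (l : List α) (hl : l.Nodup)
    (p : α → Prop) : (l.toFinset.filter p).card = l.countP (fun a => decide (p a)) := by
  have : l.toFinset.filter p = l.toFinset.filter (fun x => decide (p x) = true) := by
    apply Finset.filter_congr; intro x _; simp
  rw [this, ← List.toFinset_filter, List.toFinset_card_of_nodup (hl.filter _),
    List.countP_eq_length_filter]

lemma indicator_ineq {V : Type*} [DecidableEq V] (T H : Finset V) (e : Sym2 V)
    [Decidable (crossing (T ∩ H) e)] [Decidable (crossing (T \ H) e)]
    [Decidable (crossing T e)] [Decidable (crossing H e ∧ ∀ a ∈ e, a ∈ T)] :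
    (if crossing (T ∩ H) e then 1 else 0) + (if crossing (T \ H) e then 1 else 0)
    ≤ (if crossing T e then 1 else 0)
      + 2 * (if (crossing H e ∧ ∀ a ∈ e, a ∈ T) then 1 else 0) := by
  obtain ⟨⟨u, w⟩, rfl⟩ := e.exists_rep
  show (if crossing (T ∩ H) s(u,w) then 1 else 0) + (if crossing (T \ H) s(u,w) then 1 else 0)
    ≤ (if crossing T s(u,w) then 1 else 0)
      + 2 * (if (crossing H s(u,w) ∧ ∀ a ∈ s(u,w), a ∈ T) then 1 else 0)
  by_cases hu : u ∈ T <;> by_cases hw : w ∈ T <;>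
  by_cases hu' : u ∈ H <;> by_cases hw' : w ∈ H <;>
  simp [crossing_mk, Finset.mem_inter, Finset.mem_sdiff, hu, hw, hu', hw', Sym2.mem_iff]

theorem comb_inequality_valid (n : ℕ) (hn : 3 ≤ n)
    (H : Finset (Fin n)) (k : ℕ) (T : Fin k → Finset (Fin n))
    (hcomb : IsComb H T) (hTH : ∀ i, (T i \ H).Nonempty)
    (v : Fin n) (C : (⊤ : SimpleGraph (Fin n)).Walk v v)
    (hC : C.IsHamiltonianCycle) :
    3 * k + 1 ≤ (C.edges.toFinset.filter (crossing H)).card +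
      ∑ i, (C.edges.toFinset.filter (crossing (T i))).card := by
  obtain ⟨hk3, hkodd, hdisj, hHT, hHfree⟩ := hcomb
  set d : Finset (Fin n) → ℕ := fun S => (C.edges.toFinset.filter (crossing S)).card with hd
  have hnd : C.edges.Nodup := hC.isCycle.isTrail.edges_nodup
  have hcount : ∀ S, d S = C.edges.countP (fun e => decide (crossing S e)) :=
    fun S => card_filter_toFinset _ hnd _
  have heven : ∀ S : Finset (Fin n), d S % 2 = 0 := by
    intro S; rw [hcount, parity_lemma]; simp
  have h2 : ∀ S : Finset (Fin n), S.Nonempty → (∃ y, y ∉ S) → 2 ≤ d S := by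
    rintro S ⟨x, hx⟩ ⟨y, hy⟩
    have h1 : d S ≠ 0 := by
      intro h0
      have hemp : ∀ e ∈ C.edges, ¬ crossing S e := by
        intro e he hce
        have : e ∈ C.edges.toFinset.filter (crossing S) := by
          simp [List.mem_toFinset.mpr he, hce]
        simp only [hd] at h0
        rw [Finset.card_eq_zero] at h0
        simp [h0] at this
      have hx' := const_of_no_crossing S C hemp x (hC.mem_support x)
      have hy' := const_of_no_crossing S C hemp y (hC.mem_support y)
      tauto
    have := heven S
    omega
  -- per-tooth internal crossing counts
  set b : Fin k → ℕ := fun i =>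
    (C.edges.toFinset.filter (fun e => crossing H e ∧ ∀ a ∈ e, a ∈ T i)).card with hb
  have hper : ∀ i, 4 ≤ d (T i) + 2 * b i := by
    intro i
    have hA : 2 ≤ d (T i ∩ H) := by
      apply h2
      · obtain ⟨x, hx⟩ := hHT i
        rw [Finset.mem_inter] at hx
        exact ⟨x, Finset.mem_inter.mpr ⟨hx.2, hx.1⟩⟩
      · obtain ⟨y, hy⟩ := hTH i
        rw [Finset.mem_sdiff] at hy
        exact ⟨y, fun hmem => hy.2 (Finset.mem_inter.mp hmem).2⟩
    have hB : 2 ≤ d (T i \ H) := by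
      apply h2
      · exact hTH i
      · obtain ⟨y, hy⟩ := hHT i
        rw [Finset.mem_inter] at hy
        exact ⟨y, fun hmem => (Finset.mem_sdiff.mp hmem).2 hy.1⟩
    have key : d (T i ∩ H) + d (T i \ H) ≤ d (T i) + 2 * b i := by
      simp only [hd, hb, Finset.card_filter]
      rw [← Finset.sum_add_distrib, Finset.mul_sum, ← Finset.sum_add_distrib]
      exact Finset.sum_le_sum fun e _ => indicator_ineq (T i) H e
    omega
  have hsum1 : 4 * k ≤ (∑ i, d (T i)) + 2 * ∑ i, b i := by
    calc 4 * k = ∑ _i : Fin k, 4 := by simp [Finset.sum_const, mul_comm]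
    _ ≤ ∑ i, (d (T i) + 2 * b i) := Finset.sum_le_sum fun i _ => hper i
    _ = (∑ i, d (T i)) + 2 * ∑ i, b i := by
        rw [Finset.sum_add_distrib, Finset.mul_sum]
  have hsum2 : (∑ i, b i) ≤ d H := by
    simp only [hb, hd]
    rw [← Finset.card_biUnion]
    · apply Finset.card_le_card
      intro e he
      rw [Finset.mem_biUnion] at he
      obtain ⟨i, _, he⟩ := he
      rw [Finset.mem_filter] at he ⊢
      exact ⟨he.1, he.2.1⟩
    · intro i _ j _ hij
      simp only [Function.onFun]
      rw [Finset.disjoint_left]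
      intro e hei hej
      rw [Finset.mem_filter] at hei hej
      have hmem : e.out.1 ∈ e := Sym2.out_fst_mem e
      exact Finset.disjoint_left.mp (hdisj i j hij) (hei.2.2 _ hmem) (hej.2.2 _ hmem)
  have hsum3 : 2 * k ≤ ∑ i, d (T i) := by
    calc 2 * k = ∑ _i : Fin k, 2 := by simp [Finset.sum_const, mul_comm]
    _ ≤ ∑ i, d (T i) := by
        apply Finset.sum_le_sum
        intro i _
        apply h2
        · obtain ⟨x, hx⟩ := hHT i
          exact ⟨x, (Finset.mem_inter.mp hx).2⟩
        · obtain ⟨y, hy⟩ := hHfree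
          rw [Finset.mem_sdiff] at hy
          exact ⟨y, fun hmem => hy.2 (Finset.mem_biUnion.mpr ⟨i, Finset.mem_univ i, hmem⟩)⟩
  have hgoal : (3:ℕ) * k + 1 ≤ d H + ∑ i, d (T i) → 3 * k + 1 ≤
      (C.edges.toFinset.filter (crossing H)).card +
      ∑ i, (C.edges.toFinset.filter (crossing (T i))).card := fun h => h
  apply hgoal
  have hEH := heven H
  have hkodd' : k % 2 = 1 := Nat.odd_iff.mp hkodd
  omega
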